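/- Fix an integer K ≥ 1 and a real number p ∈ (0,1], and let A = A(p,K) be the (2K+2)×(2K+2) real matrix described in the context. Then the characteristic polynomial of A satisfies det(λI − A) = λ^{K+1} (λ+1)^K (λ − (2p−1)); in particular the eigenvalues of A are 2p−1 (simple when p ≠ 1/2 and p ≠ 0), 0 with algebraic multiplicity K+1, and −1 with algebraic multiplicity K. -/

import Mathlib

open MeasureTheory ProbabilityTheory Filter Matrix Asymptotics
open scoped ENNReal NNReal Topology

noncomputable section

namespace PolyaUrnPaper

/-- The state space of a `q`-colour urn: vectors in `ℝ^q` with the Euclidean norm. -/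
abbrev E (q : ℕ) := EuclideanSpace ℝ (Fin q)

/-- The complexified state space `ℂ^q` with the Euclidean norm. -/
abbrev EC (q : ℕ) := EuclideanSpace ℂ (Fin q)

variable {q : ℕ}

/-- Total activity `a · x` of a composition vector `x`. -/
def totAct (a : Fin q → ℝ) (x : E q) : ℝ := ∑ i, a i * x i

/-- Coordinatewise complexification of a real vector. -/
def toC (x : E q) : EC q := WithLp.toLp 2 fun i => (x i : ℂ)

variable {Ω : Type*} [MeasurableSpace Ω]

/-- The σ-field `ℱ_n` generated by `X_1, …, X_n`. -/
def urnFiltration (X : ℕ → Ω → E q) (n : ℕ) : MeasurableSpace Ω :=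
  ⨆ k ∈ Finset.Icc 1 n, MeasurableSpace.comap (X k) inferInstance

/-- The total activity process `S_n = a · X_n`. -/
def Sproc (a : Fin q → ℝ) (X : ℕ → Ω → E q) (n : ℕ) (ω : Ω) : ℝ := totAct a (X n ω)

/-- The increment `ΔX_n = X_{n+1} - X_n`. -/
def ΔX (X : ℕ → Ω → E q) (n : ℕ) (ω : Ω) : E q := X (n + 1) ω - X n ω

/-- The event `E_n^c` of non-extinction up to time `n`. -/
def NE (a : Fin q → ℝ) (X : ℕ → Ω → E q) (n : ℕ) : Set Ω :=
  {ω | ∀ k ≤ n, 0 < Sproc a X k ω}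

/-- The event of non-extinction (at all times). -/
def NEinf (a : Fin q → ℝ) (X : ℕ → Ω → E q) : Set Ω :=
  {ω | ∀ k, 0 < Sproc a X k ω}

/-- A generalized Pólya urn process: `P` is a probability measure, `a` the (nonnegative)
activity vector, `ξ i` the law of the replacement vector for colour `i`, `X₀` the non-random
initial composition with `a · X₀ > 0`, and `X` the urn process.  The `dynamics` field states
that conditionally on `ℱ_n`, on the event `S_n > 0` the increment `ΔX_n` is distributed
as the mixture `∑ i (a_i X_{n,i}/S_n) ξ_i` (drawing colour `i` with probability
`a_i X_{n,i}/S_n` and then using law `ξ_i`, independently of the past), and `ΔX_n = 0`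
on the event `S_n = 0`. -/
structure IsPolyaUrn (P : Measure Ω) (a : Fin q → ℝ) (ξ : Fin q → Measure (E q))
    (X₀ : E q) (X : ℕ → Ω → E q) : Prop where
  probP : IsProbabilityMeasure P
  probξ : ∀ i, IsProbabilityMeasure (ξ i)
  ha : ∀ i, 0 ≤ a i
  hX₀nonneg : ∀ i, 0 ≤ X₀ i
  haX₀ : 0 < totAct a X₀
  hX0 : ∀ ω, X 0 ω = X₀
  measX : ∀ n, Measurable (X n)
  dynamics : ∀ n, ∀ B : Set (E q), MeasurableSet B →
    ∀ᵐ ω ∂P,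
      (P[fun ω' => B.indicator (fun _ => (1 : ℝ)) (ΔX X n ω') | urnFiltration X n]) ω =
        if 0 < Sproc a X n ω then
          ∑ i, (a i * X n ω i / Sproc a X n ω) * (ξ i B).toReal
        else B.indicator (fun _ => (1 : ℝ)) 0

/-- Tenability: almost surely all coordinates of `X_n` are nonnegative for all `n`. -/
def Tenable (P : Measure Ω) (X : ℕ → Ω → E q) : Prop :=
  ∀ n, ∀ᵐ ω ∂P, ∀ i, 0 ≤ X n ω i

/-- The urn is balanced in expectation with constant `b`:
`a · E ξ_i = b` for every colour `i` with positive activity. -/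
def BalancedInExp (a : Fin q → ℝ) (ξ : Fin q → Measure (E q)) (b : ℝ) : Prop :=
  ∀ i, 0 < a i → ∫ x, totAct a x ∂(ξ i) = b

/-- The intensity matrix `A = (a_j E ξ_{j,i})_{i,j}`. -/
def intensity (a : Fin q → ℝ) (ξ : Fin q → Measure (E q)) : Matrix (Fin q) (Fin q) ℝ :=
  Matrix.of fun i j => a j * ∫ x, x i ∂(ξ j)

/-- The intensity matrix viewed as a complex matrix. -/
def intensityC (a : Fin q → ℝ) (ξ : Fin q → Measure (E q)) : Matrix (Fin q) (Fin q) ℂ :=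
  (intensity a ξ).map Complex.ofReal

/-- The largest eigenvalue `λ₁` of `A` equals `b`: `b` is an eigenvalue and it dominates
the real parts of all eigenvalues. -/
def LambdaOneIs (A : Matrix (Fin q) (Fin q) ℂ) (b : ℝ) : Prop :=
  (b : ℂ) ∈ spectrum ℂ A ∧ ∀ μ ∈ spectrum ℂ A, μ.re ≤ b

/-- Condition `U(p)`: the urn is tenable and balanced in expectation with `λ₁ = b > 0`,
and `E|ξ_i|^p < ∞` for all colours `i`. -/
def CondU (P : Measure Ω) (a : Fin q → ℝ) (ξ : Fin q → Measure (E q))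
    (X₀ : E q) (X : ℕ → Ω → E q) (b : ℝ) (p : ℝ) : Prop :=
  IsPolyaUrn P a ξ X₀ X ∧ Tenable P X ∧ BalancedInExp a ξ b ∧ 0 < b ∧
    LambdaOneIs (intensityC a ξ) b ∧
    ∀ i, ∫⁻ x, (‖x‖₊ : ℝ≥0∞) ^ p ∂(ξ i) < ∞

/-- `Re λ₂`: the largest real part among the eigenvalues of `A` (counted with algebraic
multiplicity) after removing one copy of `λ₁ = b`. -/
def secondRe (A : Matrix (Fin q) (Fin q) ℂ) (b : ℝ) : ℝ :=
  letI : DecidableEq ℂ := Classical.decEq ℂ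
  sSup (Complex.re '' {μ : ℂ | μ ∈ A.charpoly.roots.erase (b : ℂ)})

/-- `ν_λ`: one less than the size of the largest Jordan block of `A` for `λ`, i.e. the least
`m` such that `ker (A - λ)^{m+1} = ker (A - λ)^{m+2}`. -/
def nuOf (A : Matrix (Fin q) (Fin q) ℂ) (μ : ℂ) : ℕ :=
  sInf {m : ℕ | LinearMap.ker (Matrix.mulVecLin ((A - μ • 1) ^ (m + 1))) =
      LinearMap.ker (Matrix.mulVecLin ((A - μ • 1) ^ (m + 2)))}

/-- `ν₂ = ν_{λ₂}`: the largest `ν_μ` among remaining eigenvalues `μ` with `Re μ = Re λ₂`. -/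
def secondNu (A : Matrix (Fin q) (Fin q) ℂ) (b : ℝ) : ℕ :=
  letI : DecidableEq ℂ := Classical.decEq ℂ
  sSup (nuOf A '' {μ : ℂ | μ ∈ A.charpoly.roots.erase (b : ℂ) ∧ μ.re = secondRe A b})

/-- The generalized eigenspace of a matrix `A` for `μ`, i.e. `ker (A - μ I)^q`. -/
def genEig (A : Matrix (Fin q) (Fin q) ℂ) (μ : ℂ) : Submodule ℂ (Fin q → ℂ) :=
  LinearMap.ker (Matrix.mulVecLin ((A - μ • 1) ^ q))

/-- `Pm` is the spectral projection of `A` for the eigenvalue `μ`: the projection onto the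
generalized eigenspace of `μ` along the sum of the generalized eigenspaces of the other
eigenvalues. -/
def IsSpectralProjection (A : Matrix (Fin q) (Fin q) ℂ) (μ : ℂ)
    (Pm : Matrix (Fin q) (Fin q) ℂ) : Prop :=
  Pm * Pm = Pm ∧
    LinearMap.range Pm.mulVecLin = genEig A μ ∧
    LinearMap.ker Pm.mulVecLin = ⨆ ν ∈ spectrum ℂ A \ {μ}, genEig A ν

/-- `ω_n = a·X₀ + n b`, the conditional expectation of the total activity. -/
def omegaSeq (a : Fin q → ℝ) (X₀ : E q) (b : ℝ) (n : ℕ) : ℝ := totAct a X₀ + n * b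

/-- The matrix product `F_{ℓ,n} = ∏_{ℓ ≤ k < n} (I + ω_k⁻¹ A)` (complex version). -/
def FprodC (A : Matrix (Fin q) (Fin q) ℂ) (w : ℕ → ℝ) (l n : ℕ) : Matrix (Fin q) (Fin q) ℂ :=
  (((List.range' l (n - l)).map fun k =>
      (1 : Matrix (Fin q) (Fin q) ℂ) + ((w k : ℂ))⁻¹ • A)).prod

/-- The matrix product `F_{ℓ,n} = ∏_{ℓ ≤ k < n} (I + ω_k⁻¹ A)` (real version). -/
def FprodR (A : Matrix (Fin q) (Fin q) ℝ) (w : ℕ → ℝ) (l n : ℕ) : Matrix (Fin q) (Fin q) ℝ :=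
  (((List.range' l (n - l)).map fun k =>
      (1 : Matrix (Fin q) (Fin q) ℝ) + (w k)⁻¹ • A)).prod

/-- The operator norm (w.r.t. Euclidean norms) of a complex matrix. -/
def opNorm (M : Matrix (Fin q) (Fin q) ℂ) : ℝ :=
  ‖LinearMap.toContinuousLinearMap (Matrix.toEuclideanLin M)‖

/-- The conditional expectation `E[X_n | E_n^c]` of the urn composition given
non-extinction up to time `n`. -/
def condMean (P : Measure Ω) (a : Fin q → ℝ) (X : ℕ → Ω → E q) (n : ℕ) : E q :=
  ∫ ω, X n ω ∂(P[|NE a X n])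

/-- The martingale difference part `Y_n = ΔX_{n-1} - E[ΔX_{n-1} | ℱ_{n-1}]`. -/
def Yseq (P : Measure Ω) (X : ℕ → Ω → E q) (n : ℕ) (ω : Ω) : E q :=
  ΔX X (n - 1) ω - (P[ΔX X (n - 1) | urnFiltration X (n - 1)]) ω

/-- The noise part `Z_n = ((ω_{n-1} - S_{n-1})/ω_{n-1}) E[ΔX_{n-1} | ℱ_{n-1}]`. -/
def Zseq (P : Measure Ω) (a : Fin q → ℝ) (X₀ : E q) (b : ℝ) (X : ℕ → Ω → E q)
    (n : ℕ) (ω : Ω) : E q :=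
  ((omegaSeq a X₀ b (n - 1) - Sproc a X (n - 1) ω) / omegaSeq a X₀ b (n - 1)) •
    (P[ΔX X (n - 1) | urnFiltration X (n - 1)]) ω

/-- `(Y_n)_{n ≥ 1}` is a martingale difference sequence for the filtration `ℱ`. -/
def IsMDSeq {V : Type*} [NormedAddCommGroup V] [NormedSpace ℝ V] [CompleteSpace V]
    (P : Measure Ω) (ℱ : ℕ → MeasurableSpace Ω) (Y : ℕ → Ω → V) : Prop :=
  ∀ n, 1 ≤ n → Integrable (Y n) P ∧ StronglyMeasurable[ℱ n] (Y n) ∧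
    P[Y n | ℱ (n - 1)] =ᵐ[P] 0

/-- `G` is a centered Gaussian measure on `ℝ^q` with covariance matrix `Sig`,
characterized through its characteristic function. -/
def IsCenteredGaussianWithCov (Sig : Matrix (Fin q) (Fin q) ℝ) (G : Measure (E q)) : Prop :=
  IsProbabilityMeasure G ∧
    ∀ t : E q, ∫ x, Complex.exp (Complex.I * ((∑ i, t i * x i : ℝ) : ℂ)) ∂G =
      Complex.exp (-(1 / 2 : ℂ) * ((∑ i, ∑ j, t i * Sig i j * t j : ℝ) : ℂ))

/-- Convergence in distribution of a sequence of (probability) measures on `ℝ^q`: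
integrals of every bounded continuous function converge. -/
def TendstoInDistribution (μs : ℕ → Measure (E q)) (G : Measure (E q)) : Prop :=
  ∀ f : BoundedContinuousFunction (E q) ℝ,
    Tendsto (fun n => ∫ x, f x ∂(μs n)) atTop (𝓝 (∫ x, f x ∂G))


/-- Multiplication of a real matrix with a vector in `ℝ^q` (Euclidean). -/
def mulVecE {q : ℕ} (M : Matrix (Fin q) (Fin q) ℝ) (v : E q) : E q :=
  WithLp.toLp 2 fun i => ∑ j, M i j * v j

/-- Multiplication of a complex matrix with a vector in `ℂ^q` (Euclidean). -/
def mulVecEC {q : ℕ} (M : Matrix (Fin q) (Fin q) ℂ) (v : EC q) : EC q :=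
  WithLp.toLp 2 fun i => ∑ j, M i j * v j

/-- The algebraic multiplicity of `μ` as an eigenvalue of `A` (as a root of the
characteristic polynomial). -/
def algMult {q : ℕ} (A : Matrix (Fin q) (Fin q) ℂ) (μ : ℂ) : ℕ :=
  letI : DecidableEq ℂ := Classical.decEq ℂ
  A.charpoly.roots.count μ

end PolyaUrnPaper



open PolyaUrnPaper MeasureTheory ProbabilityTheory Filter Matrix Polynomial

namespace PolyaUrnPaper

/-- The intensity matrix of the urn of outdegrees (up to `K`) of uniform attachment trees
with freezing, with activation probability `p` (0-indexed version of the matrix `A` of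
Section 6.1). -/
def freezeMatrix (p : ℝ) (K : ℕ) : Matrix (Fin (2 * K + 2)) (Fin (2 * K + 2)) ℝ :=
  Matrix.of fun i j =>
    if j.val = 0 then
      (if i.val = 0 then p - 1 else if i.val = 1 then 1 - p else if i.val = 2 then p else 0)
    else if j.val % 2 = 0 ∧ j.val < 2 * K then
      (if i.val = 0 then p else 0) + (if i.val = j.val then -1 else 0) +
        (if i.val = j.val + 1 then 1 - p else 0) + (if i.val = j.val + 2 then p else 0)
    else if j.val = 2 * K then
      (if i.val = 0 then p else 0) + (if i.val = 2 * K then -(1 - p) else 0) +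
        (if i.val = 2 * K + 1 then 1 - p else 0)
    else 0

/-- The activity vector of the freezing urn: odd (paper) colours, i.e. even 0-based
indices, are active with activity `1`; frozen colours have activity `0`. -/
def freezeAct (K : ℕ) : Fin (2 * K + 2) → ℝ := fun j => if j.val % 2 = 0 then 1 else 0

/-- The right eigenvector `v₁` of `freezeMatrix p K` for the eigenvalue `2p - 1`,
normalized by `a · v₁ = 1`. -/
def freezeV (p : ℝ) (K : ℕ) : E (2 * K + 2) := WithLp.toLp 2 fun (j : Fin (2 * K + 2)) =>
  if j.val % 2 = 0 then
    (if j.val = 2 * K then (1 : ℝ) / 2 ^ K else 1 / 2 ^ (j.val / 2 + 1))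
  else
    (if j.val = 2 * K + 1 then (1 - p) / ((2 * p - 1) * 2 ^ K)
     else (1 - p) / ((2 * p - 1) * 2 ^ (j.val / 2 + 1)))

end PolyaUrnPaper


namespace FreezeAux

variable {R : Type*} [CommRing R]

lemma sum_eq_two {n : ℕ} {M : Type*} [AddCommMonoid M] (f : Fin n → M) (a b : Fin n)
    (hab : a ≠ b) (h : ∀ k, k ≠ a → k ≠ b → f k = 0) :
    ∑ i, f i = f a + f b := by
  rw [← Finset.sum_pair hab]
  refine (Finset.sum_subset (Finset.subset_univ _) fun x _ hx => ?_).symm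
  simp only [Finset.mem_insert, Finset.mem_singleton, not_or] at hx
  exact h x hx.1 hx.2

/-- The auxiliary matrix: first row all ones, subdiagonal `w`, diagonal `v`
(except the last diagonal entry, which is `u`), everything else `0`. -/
def Tmat (w v u : R) (n : ℕ) : Matrix (Fin (n+1)) (Fin (n+1)) R :=
  Matrix.of fun i j =>
    if i.val = 0 then 1
    else if j.val + 1 = i.val then w
    else if i = j then (if i.val = n then u else v) else 0

lemma det_Tmat_zero (w v u : R) : (Tmat w v u 0).det = 1 := by
  rw [Matrix.det_fin_one]; simp [Tmat]

lemma det_Tmat_succ (w v u : R) (n : ℕ) :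
    (Tmat w v u (n+1)).det = (-1)^(n+1) * w^(n+1) + u * (Tmat w v v n).det := by
  rw [Matrix.det_succ_column (Tmat w v u (n+1)) (Fin.last (n+1))]
  rw [sum_eq_two _ (0 : Fin (n+2)) (Fin.last (n+1))
    (by simp [Fin.ext_iff])
    (fun k hk0 hkl => by
      have h0 : k.val ≠ 0 := fun h => hk0 (Fin.ext h)
      have hl : k.val ≠ n + 1 := by simpa [Fin.ext_iff] using hkl
      have hk : Tmat w v u (n+1) k (Fin.last (n+1)) = 0 := by
        have hk2 : k.val < n + 2 := k.isLt
        simp only [Tmat, of_apply, Fin.val_last, Fin.ext_iff]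
        rw [if_neg h0, if_neg (by omega), if_neg (by omega)]
      rw [hk]; ring)]
  have e1 : Tmat w v u (n+1) 0 (Fin.last (n+1)) = 1 := by simp [Tmat]
  have e2 : Tmat w v u (n+1) (Fin.last (n+1)) (Fin.last (n+1)) = u := by
    simp only [Tmat, of_apply, Fin.val_last]
    rw [if_neg (by omega), if_neg (by omega)]; simp
  have m1 : ((Tmat w v u (n+1)).submatrix (Fin.succAbove 0)
      (Fin.succAbove (Fin.last (n+1)))).det = w^(n+1) := by
    have htri : ((Tmat w v u (n+1)).submatrix (Fin.succAbove 0)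
        (Fin.succAbove (Fin.last (n+1)))).BlockTriangular id := by
      intro i j hij
      have hij' : (j : ℕ) < (i : ℕ) := hij
      simp only [submatrix_apply, Fin.succAbove_zero, Fin.succAbove_last, Tmat, of_apply,
        Fin.val_succ, Fin.coe_castSucc, Fin.ext_iff]
      rw [if_neg (by omega), if_neg (by omega), if_neg (by omega)]
    rw [Matrix.det_of_upperTriangular htri]
    have hdiag : ∀ i : Fin (n+1), ((Tmat w v u (n+1)).submatrix (Fin.succAbove 0)
        (Fin.succAbove (Fin.last (n+1)))) i i = w := by
      intro i
      simp [Tmat]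
    rw [Finset.prod_congr rfl (fun i _ => hdiag i)]
    simp
  have m2 : ((Tmat w v u (n+1)).submatrix (Fin.succAbove (Fin.last (n+1)))
      (Fin.succAbove (Fin.last (n+1)))) = Tmat w v v n := by
    ext i j
    have hi : (i : ℕ) < n + 1 := i.isLt
    simp only [submatrix_apply, Fin.succAbove_last, Tmat, of_apply, Fin.coe_castSucc,
      Fin.castSucc_inj]
    split_ifs with h1 h2 h3 h4 h5 <;> first | rfl | omega
  rw [e1, e2, m1, m2]
  simp only [Fin.val_zero, Fin.val_last, zero_add]
  have hs : ((-1 : R))^(n+1+(n+1)) = 1 := Even.neg_one_pow ⟨n+1, by omega⟩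
  rw [hs]
  ring

lemma det_Tmat_geom (w v : R) (n : ℕ) :
    (v + w) * (Tmat w v v n).det = v^(n+1) - (-w)^(n+1) := by
  induction n with
  | zero => rw [det_Tmat_zero]; ring
  | succ m ih =>
      rw [det_Tmat_succ]
      have hw : (-w)^(m+1) = (-1)^(m+1) * w^(m+1) := by rw [neg_pow]
      have hw2 : (-w)^(m+2) = (-1)^(m+2) * w^(m+2) := by rw [neg_pow]
      rw [hw2]
      calc (v + w) * ((-1)^(m+1) * w^(m+1) + v * (Tmat w v v m).det)
          = (v + w) * ((-1)^(m+1) * w^(m+1)) + v * ((v + w) * (Tmat w v v m).det) := by ring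
        _ = (v + w) * ((-1)^(m+1) * w^(m+1)) + v * (v^(m+1) - (-w)^(m+1)) := by rw [ih]
        _ = v^(m+2) - (-1)^(m+2) * w^(m+2) := by rw [hw, pow_succ]; ring

lemma det_Tmat_top (w v : R) (n : ℕ) :
    (Tmat w v (v + w) (n+1)).det = v^(n+1) := by
  rw [det_Tmat_succ, det_Tmat_geom]
  have hw : (-w)^(n+1) = (-1)^(n+1) * w^(n+1) := by rw [neg_pow]
  rw [hw]; ring

/-- The even-even block of the freezing intensity matrix. -/
def Bent (p : ℝ) (K : ℕ) : Matrix (Fin (K+1)) (Fin (K+1)) ℝ :=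
  Matrix.of fun i j =>
    if i.val = j.val + 1 then p
    else if i = j then (if j.val = 0 ∨ j.val = K then p - 1 else -1)
    else if i.val = 0 then p else 0

lemma Bent_split (p : ℝ) (K : ℕ) (i j : Fin (K+1)) :
    Bent p K i j = (if i.val = j.val + 1 then p else 0) +
      (if i = j then (if j.val = 0 ∨ j.val = K then p - 1 else -1) else 0) +
      (if i.val = 0 ∧ j.val ≠ 0 then p else 0) := by
  simp only [Bent, of_apply, Fin.ext_iff]
  split_ifs <;> first | ring1 | (exfalso; omega)

lemma Bent_colsum (p : ℝ) (K : ℕ) (hK : 1 ≤ K) (j : Fin (K+1)) :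
    ∑ i, Bent p K i j = 2 * p - 1 := by
  have h1 : ∑ i : Fin (K+1), (if i.val = j.val + 1 then p else 0)
      = if j.val < K then p else 0 := by
    by_cases hj : j.val < K
    · rw [if_pos hj]
      have : ∀ i : Fin (K+1), (i.val = j.val + 1) = (i = ⟨j.val + 1, by omega⟩) := by
        intro i; simp [Fin.ext_iff]
      simp only [this]
      simp
    · rw [if_neg hj]
      apply Finset.sum_eq_zero
      intro i _
      rw [if_neg (by omega)]
  have h2 : ∑ i : Fin (K+1), (if i = j then (if j.val = 0 ∨ j.val = K then p - 1 else -1) else 0)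
      = (if j.val = 0 ∨ j.val = K then p - 1 else -1) := by simp
  have h3 : ∑ i : Fin (K+1), (if i.val = 0 ∧ j.val ≠ 0 then p else 0)
      = if j.val ≠ 0 then p else 0 := by
    by_cases hj : j.val ≠ 0
    · have : ∀ i : Fin (K+1), (i.val = 0 ∧ j.val ≠ 0) = (i = ⟨0, by omega⟩) := by
        intro i; exact propext ⟨fun h => Fin.ext h.1, fun h => ⟨congrArg Fin.val h, hj⟩⟩
      simp only [this]
      rw [Finset.sum_ite_eq']; simp [hj]
    · simp [hj]
  simp only [Bent_split, Finset.sum_add_distrib, h1, h2, h3]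
  have hjv : j.val < K + 1 := j.isLt
  by_cases hj0 : j.val = 0
  · rw [if_pos (by omega), if_pos (Or.inl hj0), if_neg (by omega)]; ring
  · by_cases hjK : j.val = K
    · rw [if_neg (by omega), if_pos (Or.inr hjK), if_pos hj0]; ring
    · rw [if_pos (by omega), if_neg (by omega), if_pos hj0]; ring

lemma charmatrix_colsum (p : ℝ) (K : ℕ) (hK : 1 ≤ K) (j : Fin (K+1)) :
    ∑ i, charmatrix (Bent p K) i j = X - C (2 * p - 1) := by
  simp only [charmatrix_apply]
  rw [Finset.sum_sub_distrib, ← map_sum, Bent_colsum p K hK j]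
  congr 1
  simp [Matrix.diagonal_apply]

lemma updateRow_eq_Tmat (p : ℝ) (K : ℕ) :
    (charmatrix (Bent p K)).updateRow 0 (fun _ => 1) =
      Tmat (-C p) (X + 1) (X - C (p - 1)) K := by
  apply Matrix.ext
  intro i j
  by_cases hi : i.val = 0
  · rw [show i = 0 from Fin.ext hi, Matrix.updateRow_self]
    simp [Tmat]
  · have hi' : i ≠ 0 := fun h => hi (by simp [h])
    rw [Matrix.updateRow_ne hi', charmatrix_apply, Matrix.diagonal_apply]
    simp only [Tmat, Bent, of_apply, Fin.ext_iff]
    split_ifs <;>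
      first
        | (exfalso; omega)
        | (simp only [map_neg, Polynomial.C_1, map_zero, map_sub]; ring1)
        | ring1

lemma det_charmatrix_Bent (p : ℝ) (n : ℕ) :
    (charmatrix (Bent p (n+1))).det = (X - C (2 * p - 1)) * (X + 1)^(n+1) := by
  have hK : 1 ≤ n + 1 := by omega
  have h0 := Matrix.det_updateRow_sum (charmatrix (Bent p (n+1))) 0 (fun _ => (1 : ℝ[X]))
  simp only [one_smul, smul_eq_mul, one_mul] at h0
  have hsum : (∑ k, charmatrix (Bent p (n+1)) k) =
      (X - C (2 * p - 1)) • (fun _ => (1 : ℝ[X])) := by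
    funext j
    rw [show (∑ k, charmatrix (Bent p (n+1)) k) j = ∑ k, charmatrix (Bent p (n+1)) k j from
      Finset.sum_apply j _ _, charmatrix_colsum p (n+1) hK j]
    simp
  rw [hsum, Matrix.det_updateRow_smul, updateRow_eq_Tmat p (n+1)] at h0
  have hvw : (X - C (p - 1) : ℝ[X]) = (X + 1) + (-C p) := by
    simp only [map_sub, Polynomial.C_1]
    ring
  rw [hvw, det_Tmat_top] at h0
  exact h0.symm

/-- The interleaving equivalence. -/
def evenOdd (K : ℕ) : Fin (K+1) ⊕ Fin (K+1) ≃ Fin (2*K+2) where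
  toFun x := Sum.elim (fun m : Fin (K+1) => (⟨2*m.val, by omega⟩ : Fin (2*K+2)))
    (fun m : Fin (K+1) => (⟨2*m.val+1, by omega⟩ : Fin (2*K+2))) x
  invFun i := if h : i.val % 2 = 0 then Sum.inl ⟨i.val/2, by omega⟩
    else Sum.inr ⟨i.val/2, by omega⟩
  left_inv := by
    rintro (m|m) <;> dsimp only [Sum.elim_inl, Sum.elim_inr] <;> split <;>
      simp only [Sum.inl.injEq, Sum.inr.injEq, Fin.ext_iff, reduceCtorEq] <;>
      (try dsimp only) <;> omega
  right_inv := by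
    intro i
    dsimp only [Sum.elim_inl, Sum.elim_inr]
    split <;> (try dsimp only [Sum.elim_inl, Sum.elim_inr]) <;> refine Fin.ext ?_ <;>
      (try dsimp only) <;> omega

lemma evenOdd_inl (K : ℕ) (m : Fin (K+1)) :
    evenOdd K (Sum.inl m) = (⟨2*m.val, by omega⟩ : Fin (2*K+2)) := rfl

lemma evenOdd_inr (K : ℕ) (m : Fin (K+1)) :
    evenOdd K (Sum.inr m) = (⟨2*m.val+1, by omega⟩ : Fin (2*K+2)) := rfl

lemma fm_ee (p : ℝ) (K : ℕ) (i j : Fin (K+1)) (a b : Fin (2*K+2))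
    (ha : a.val = 2*i.val) (hb : b.val = 2*j.val) :
    PolyaUrnPaper.freezeMatrix p K a b = Bent p K i j := by
  simp only [PolyaUrnPaper.freezeMatrix, Bent, of_apply, Fin.ext_iff]
  split_ifs <;> first | ring1 | (exfalso; omega)

lemma fm_odd (p : ℝ) (K : ℕ) (j : Fin (K+1)) (a b : Fin (2*K+2))
    (hb : b.val = 2*j.val+1) :
    PolyaUrnPaper.freezeMatrix p K a b = 0 := by
  simp only [PolyaUrnPaper.freezeMatrix, of_apply]
  split_ifs <;> first | rfl | (exfalso; omega)

end FreezeAux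

open FreezeAux in
lemma freezeMatrix_charpoly_eq (n : ℕ) (p : ℝ) :
    (PolyaUrnPaper.freezeMatrix p (n+1)).charpoly =
      X ^ (n + 2) * (X + 1) ^ (n + 1) * (X - C (2 * p - 1)) := by
  have hM : (charmatrix (PolyaUrnPaper.freezeMatrix p (n+1))).submatrix
        (evenOdd (n+1)) (evenOdd (n+1)) =
      Matrix.fromBlocks (charmatrix (Bent p (n+1))) 0
        (Matrix.of fun i j => (charmatrix (PolyaUrnPaper.freezeMatrix p (n+1))).submatrix
          (evenOdd (n+1)) (evenOdd (n+1)) (Sum.inr i) (Sum.inl j))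
        (Matrix.diagonal fun _ => (X : ℝ[X])) := by
    apply Matrix.ext
    rintro (i|i) (j|j)
    · rw [Matrix.submatrix_apply, Matrix.fromBlocks_apply₁₁, evenOdd_inl, evenOdd_inl]
      by_cases hij : i = j
      · subst hij
        rw [charmatrix_apply_eq, charmatrix_apply_eq, fm_ee p (n+1) i i _ _ rfl rfl]
      · have hv : i.val ≠ j.val := fun h => hij (Fin.ext h)
        rw [charmatrix_apply_ne _ _ _ (Fin.ne_of_val_ne (by dsimp only; omega)),
          charmatrix_apply_ne _ _ _ hij, fm_ee p (n+1) i j _ _ rfl rfl]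
    · rw [Matrix.submatrix_apply, Matrix.fromBlocks_apply₁₂, evenOdd_inl, evenOdd_inr,
        charmatrix_apply_ne _ _ _ (Fin.ne_of_val_ne (by dsimp only; omega)),
        fm_odd p (n+1) j _ _ rfl]
      simp
    · rfl
    · rw [Matrix.submatrix_apply, Matrix.fromBlocks_apply₂₂, evenOdd_inr, evenOdd_inr]
      by_cases hij : i = j
      · subst hij
        rw [charmatrix_apply_eq, fm_odd p (n+1) i _ _ rfl, Matrix.diagonal_apply_eq]
        simp
      · rw [charmatrix_apply_ne _ _ _ (Fin.ne_of_val_ne (by dsimp only; omega)),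
          fm_odd p (n+1) j _ _ rfl, Matrix.diagonal_apply_ne _ hij]
        simp
  have hcp : (PolyaUrnPaper.freezeMatrix p (n+1)).charpoly
      = (charmatrix (PolyaUrnPaper.freezeMatrix p (n+1))).det := rfl
  rw [hcp, ← Matrix.det_submatrix_equiv_self (evenOdd (n+1)), hM,
    Matrix.det_fromBlocks_zero₁₂, det_charmatrix_Bent, Matrix.det_diagonal]
  simp only [Finset.prod_const, Finset.card_univ, Fintype.card_fin]
  ring

/-- **From the proof of Proposition 6.1:** the characteristic polynomial of the intensity
matrix of the freezing urn is `λ^{K+1} (λ+1)^K (λ - (2p-1))`; in particular its eigenvalues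
are `2p-1` (simple when `p ≠ 1/2` and `p ≠ 0`), `0` with algebraic multiplicity `K+1`,
and `-1` with algebraic multiplicity `K`. -/
theorem freezeMatrix_charpoly (K : ℕ) (hK : 1 ≤ K) (p : ℝ) (hp : p ∈ Set.Ioc (0 : ℝ) 1) :
    (freezeMatrix p K).charpoly =
      Polynomial.X ^ (K + 1) * (Polynomial.X + 1) ^ K *
        (Polynomial.X - Polynomial.C (2 * p - 1)) ∧
    (p ≠ 1 / 2 → p ≠ 0 →
      ((freezeMatrix p K).charpoly.roots.count (2 * p - 1) = 1 ∧
       (freezeMatrix p K).charpoly.roots.count 0 = K + 1 ∧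
       (freezeMatrix p K).charpoly.roots.count (-1) = K)) := by
  obtain ⟨n, rfl⟩ : ∃ n, K = n + 1 := ⟨K - 1, by omega⟩
  have hchar := freezeMatrix_charpoly_eq n p
  refine ⟨hchar, fun hp2 hp0 => ?_⟩
  have hc0 : (2 * p - 1 : ℝ) ≠ 0 := fun h => hp2 (by linarith)
  have hcm : (2 * p - 1 : ℝ) ≠ -1 := fun h => hp0 (by linarith)
  have hc0' : (0 : ℝ) ≠ 2 * p - 1 := Ne.symm hc0
  have hcm' : (-1 : ℝ) ≠ 2 * p - 1 := Ne.symm hcm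
  have hX1 : ((X : ℝ[X]) + 1) = X - C (-1) := by simp
  have h1 : ((X : ℝ[X]) ^ (n+2)) ≠ 0 := pow_ne_zero _ X_ne_zero
  have h2 : (((X : ℝ[X]) + 1) ^ (n+1)) ≠ 0 := pow_ne_zero _ (by
    rw [hX1]; exact X_sub_C_ne_zero _)
  have h3 : ((X : ℝ[X]) - C (2 * p - 1)) ≠ 0 := X_sub_C_ne_zero _
  have hroots : ((X : ℝ[X]) ^ (n+2) * (X + 1) ^ (n+1) * (X - C (2 * p - 1))).roots
      = (n+2) • ({0} : Multiset ℝ) + (n+1) • {-1} + {2 * p - 1} := by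
    rw [Polynomial.roots_mul (mul_ne_zero (mul_ne_zero h1 h2) h3),
      Polynomial.roots_mul (mul_ne_zero h1 h2), hX1,
      Polynomial.roots_pow, Polynomial.roots_pow, Polynomial.roots_X,
      Polynomial.roots_X_sub_C, Polynomial.roots_X_sub_C]
  have hKn : n + 1 + 1 = n + 2 := by omega
  rw [hchar] at *
  refine ⟨?_, ?_, ?_⟩
  · rw [hroots]
    simp [Multiset.count_nsmul, Multiset.count_singleton, hc0, hcm]
  · rw [hroots]
    simp [Multiset.count_nsmul, Multiset.count_singleton, hc0']
  · rw [hroots]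
    simp [Multiset.count_nsmul, Multiset.count_singleton, hcm']
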